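/- Let D = ad(Σ a_{α,i} L_{α,i}) + λ d be a derivation of 𝓑 (finitely many a_{α,i} nonzero) with D(L_{β,−β}) = 0, where β ∈ ℤ, −β ∈ ℤ≥0 (so β ≤ 0). Then a_{α,i} = 0 for all α ≠ −i, and if β ≠ 0 then λ = 0. -/
import Mathlib


noncomputable section

abbrev B := (ℤ × ℕ) →₀ ℂ

/-- basis element `L α i` -/
def L (α : ℤ) (i : ℕ) : B := Finsupp.single (α, i) 1

/-- structure constant `(α-1)(j+1) - (β-1)(i+1)` -/
def coef (p q : ℤ × ℕ) : ℂ :=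
  ((p.1 - 1) * ((q.2 : ℤ) + 1) - (q.1 - 1) * ((p.2 : ℤ) + 1) : ℤ)

/-- the Block-type bracket, as a bilinear map -/
def br : B →ₗ[ℂ] B →ₗ[ℂ] B :=
  Finsupp.lsum ℂ fun p => LinearMap.toSpanSingleton ℂ _
    (Finsupp.lsum ℂ fun q => LinearMap.toSpanSingleton ℂ _
      (coef p q • L (p.1 + q.1) (p.2 + q.2)))

/-- the outer derivation `d`, with `d (L β j) = β • L β j` -/
def dmap : B →ₗ[ℂ] B :=
  Finsupp.lsum ℂ fun p => LinearMap.toSpanSingleton ℂ _ ((p.1 : ℂ) • L p.1 p.2)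

def IsDer (D : B →ₗ[ℂ] B) : Prop := ∀ x y, D (br x y) = br (D x) y + br x (D y)

def Is2Local (Δ : B → B) : Prop :=
  ∀ x y, ∃ D : B →ₗ[ℂ] B, IsDer D ∧ Δ x = D x ∧ Δ y = D y

lemma br_L (a : B) (q : ℤ × ℕ) :
    br a (L q.1 q.2) = a.sum fun p c => (c * coef p q) • L (p.1 + q.1) (p.2 + q.2) := by
  rw [br, Finsupp.lsum_apply]
  rw [Finsupp.sum, LinearMap.sum_apply, Finsupp.sum]
  refine Finset.sum_congr rfl fun p _ => ?_
  rw [LinearMap.toSpanSingleton_apply, LinearMap.smul_apply]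
  rw [show L q.1 q.2 = Finsupp.single (q.1,q.2) 1 from rfl, Finsupp.lsum_single,
    LinearMap.toSpanSingleton_apply, one_smul, smul_smul, mul_comm]

lemma br_L_apply (a : B) (β α : ℤ) (j i : ℕ) :
    (br a (L β j)) (α + β, i + j) = a (α, i) * coef (α, i) (β, j) := by
  rw [br_L a (β, j), Finsupp.sum_apply, Finsupp.sum,
    Finset.sum_eq_single ((α, i) : ℤ × ℕ)]
  · simp [L, Finsupp.single_apply]
  · intro p hp hne
    rw [Finsupp.smul_apply, L, Finsupp.single_apply, if_neg, smul_zero]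
    intro hc
    apply hne
    have h1 : p.1 + β = α + β := congrArg Prod.fst hc
    have h2 : p.2 + j = i + j := congrArg Prod.snd hc
    exact Prod.ext (by omega) (by omega)
  · intro h
    rw [Finsupp.notMem_support_iff.mp h, zero_mul, zero_smul]; rfl

lemma dmap_L (β : ℤ) (j : ℕ) : dmap (L β j) = (β : ℂ) • L β j := by
  rw [dmap, show L β j = Finsupp.single (β, j) 1 from rfl, Finsupp.lsum_single,
    LinearMap.toSpanSingleton_apply, one_smul]; rfl

theorem vanishing_der_antidiagonal (j : ℕ) (a : B) (lam : ℂ)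
    (h : br a (L (-(j : ℤ)) j) + lam • dmap (L (-(j : ℤ)) j) = 0) :
    (∀ (α : ℤ) (i : ℕ), α ≠ -(i : ℤ) → a (α, i) = 0) ∧
    (j ≠ 0 → lam = 0) := by
  have key : ∀ (α : ℤ) (i : ℕ),
      a (α, i) * coef (α, i) (-(j : ℤ), j) +
        lam * (-(j : ℤ)) * (L (-(j : ℤ)) j) (α + -(j : ℤ), i + j) = 0 := by
    intro α i
    have h' := DFunLike.congr_fun h (α + -(j : ℤ), i + j)
    rw [Finsupp.add_apply, br_L_apply, dmap_L, Finsupp.smul_apply, Finsupp.smul_apply,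
      smul_eq_mul, smul_eq_mul, Finsupp.coe_zero, Pi.zero_apply] at h'
    push_cast at h' ⊢; linear_combination h'
  constructor
  · intro α i hne
    have hk := key α i
    have hL : (L (-(j : ℤ)) j) (α + -(j : ℤ), i + j) = 0 := by
      rw [L, Finsupp.single_apply, if_neg]
      intro hc
      have h1 : -(j : ℤ) = α + -(j : ℤ) := congrArg Prod.fst hc
      have h2 : (j : ℕ) = i + j := congrArg Prod.snd hc
      omega
    rw [hL, mul_zero, add_zero, mul_eq_zero] at hk
    rcases hk with hk | hk
    · exact hk
    · exfalso
      have : (((j : ℤ) + 1) * (α + i) : ℤ) ≠ 0 := by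
        have : α + (i : ℤ) ≠ 0 := by omega
        positivity
      apply this
      have : ((((j : ℤ) + 1) * (α + i) : ℤ) : ℂ) = 0 := by
        rw [← hk, coef]; push_cast; ring
      exact_mod_cast this
  · intro hj
    have hk := key 0 0
    have hc0 : coef (0, 0) (-(j : ℤ), j) = 0 := by
      rw [coef]; push_cast; ring
    have hL : (L (-(j : ℤ)) j) ((0 : ℤ) + -(j : ℤ), 0 + j) = 1 := by
      rw [L, Finsupp.single_apply, if_pos]
      simp
    rw [hc0, mul_zero, zero_add, hL, mul_one, mul_eq_zero] at hk
    rcases hk with hk | hk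
    · exact hk
    · exfalso
      exact hj (by exact_mod_cast neg_eq_zero.mp hk)
end
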